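/- Let X be a complete p-uniformly convex space and T₁, …, T_r : X → X firmly nonexpansive with F = ⋂ Fix(T_i) ≠ ∅. For x₀ ∈ X define (x_n) by d(x_{n+1}, T_{n(mod r)+1} x_n) ≤ ε_n with Σε_n < ∞. Then for each i, lim_{n→∞} d(x_n, T_i x_n) = 0, and (x_n) Δ-converges to a point u ∈ F. If moreover some T_i has boundedly compact image, then (x_n) converges strongly to u. -/

import Mathlib

open Filter Topology Metric Set

/-- A (chosen) geodesic bicombing witnessing that `X` is a geodesic space:
`geo x y t` is the point at parameter fraction `t ∈ [0,1]` on a geodesic from `x` to `y`. -/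
structure Geodesic (X : Type*) [MetricSpace X] where
  geo : X → X → ℝ → X
  geo_zero : ∀ x y, geo x y 0 = x
  geo_one : ∀ x y, geo x y 1 = y
  geo_dist : ∀ x y : X, ∀ s ∈ Set.Icc (0:ℝ) 1, ∀ t ∈ Set.Icc (0:ℝ) 1,
    dist (geo x y s) (geo x y t) = |s - t| * dist x y
/-- `u` is an asymptotic center of the sequence `s`: it minimizes `y ↦ limsup dist y (s n)`. -/
def IsAsymptoticCenter {X : Type*} [MetricSpace X] (s : ℕ → X) (u : X) : Prop :=
  ∀ y : X, Filter.limsup (fun n => dist u (s n)) Filter.atTop ≤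
    Filter.limsup (fun n => dist y (s n)) Filter.atTop

/-- `s` Δ-converges to `u`: `u` is the unique asymptotic center of every subsequence. -/
def DeltaConvergesTo {X : Type*} [MetricSpace X] (s : ℕ → X) (u : X) : Prop :=
  ∀ φ : ℕ → ℕ, StrictMono φ →
    IsAsymptoticCenter (s ∘ φ) u ∧ ∀ v : X, IsAsymptoticCenter (s ∘ φ) v → v = u

def PUnifConvex {X : Type*} [MetricSpace X] (G : Geodesic X) (p c : ℝ) : Prop :=
  ∀ x y z : X, ∀ t ∈ Set.Icc (0:ℝ) 1,
    dist z (G.geo x y t) ^ p ≤ (1 - t) * dist z x ^ p + t * dist z y ^ p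
      - c / 2 * (t * (1 - t)) * dist x y ^ p

def FirmlyNonexpansive {X : Type*} [MetricSpace X] (G : Geodesic X) (T : X → X) : Prop :=
  ∀ x y : X, ∀ lam ∈ Set.Ico (0:ℝ) 1,
    dist (T x) (T y) ≤ dist (G.geo x (T x) lam) (G.geo y (T y) lam)

/-! ### Auxiliary lemmas -/

section LimsupTools

lemma CID_bddu {f : ℕ → ℝ} {C : ℝ} (hC : ∀ n, f n ≤ C) :
    IsBoundedUnder (· ≤ ·) atTop f := isBoundedUnder_of ⟨C, hC⟩

lemma CID_cobddu {f : ℕ → ℝ} (h0 : ∀ n, 0 ≤ f n) :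
    IsCoboundedUnder (· ≤ ·) atTop f :=
  IsBoundedUnder.isCoboundedUnder_le (isBoundedUnder_of ⟨0, h0⟩)

lemma CID_limsup_nonneg {f : ℕ → ℝ} (h0 : ∀ n, 0 ≤ f n) {C : ℝ} (hC : ∀ n, f n ≤ C) :
    0 ≤ limsup f atTop :=
  le_limsup_of_frequently_le (Frequently.of_forall h0) (CID_bddu hC)

lemma CID_one_div_succ : Tendsto (fun k : ℕ => 1 / ((k : ℝ) + 1)) atTop (𝓝 0) :=
  tendsto_one_div_add_atTop_nhds_zero_nat

lemma CID_one_div_succ_pos (k : ℕ) : 0 < 1 / ((k : ℝ) + 1) := by positivity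

end LimsupTools

lemma CID_rpow_mvt {p : ℝ} (hp : 1 < p) {a b M : ℝ} (hb : 0 ≤ b) (hba : b ≤ a) (haM : a ≤ M) :
    a ^ p ≤ b ^ p + p * M ^ (p - 1) * (a - b) := by
  have ha : 0 ≤ a := le_trans hb hba
  rcases eq_or_lt_of_le ha with h | h
  · have hb0 : b = 0 := le_antisymm (h ▸ hba) hb
    simp [← h, hb0]
  · have hz : -1 ≤ b / a - 1 := by
      have : 0 ≤ b / a := div_nonneg hb (le_of_lt h)
      linarith
    have hbern := one_add_mul_self_le_rpow_one_add hz (le_of_lt hp)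
    have h1 : (1 : ℝ) + (b / a - 1) = b / a := by ring
    rw [h1] at hbern
    have hba_p : (b / a) ^ p = b ^ p / a ^ p := Real.div_rpow hb (le_of_lt h) p
    rw [hba_p] at hbern
    have hap : 0 < a ^ p := Real.rpow_pos_of_pos h p
    have h2 : a ^ p * (1 + p * (b / a - 1)) ≤ b ^ p := by
      calc a ^ p * (1 + p * (b / a - 1)) ≤ a ^ p * (b ^ p / a ^ p) :=
            mul_le_mul_of_nonneg_left hbern (le_of_lt hap)
        _ = b ^ p := by field_simp
    have h3 : a ^ p / a = a ^ (p - 1) := by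
      rw [Real.rpow_sub h, Real.rpow_one]
    have h4 : a ^ p * (b / a) = a ^ (p - 1) * b := by
      rw [← h3]; field_simp
    have h5 : a ^ p ≤ b ^ p + p * a ^ (p - 1) * (a - b) := by
      have expand : a ^ p * (1 + p * (b / a - 1))
          = a ^ p + p * (a ^ (p - 1) * b) - p * a ^ p := by
        rw [← h4]; ring
      have h6 : a ^ p = a ^ (p - 1) * a := by
        rw [← h3]; field_simp
      nlinarith [h2]
    have h7 : a ^ (p - 1) ≤ M ^ (p - 1) :=
      Real.rpow_le_rpow ha haM (by linarith)
    have hp0 : (0:ℝ) < p := by linarith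
    have hab : 0 ≤ a - b := sub_nonneg.mpr hba
    have : p * a ^ (p - 1) * (a - b) ≤ p * M ^ (p - 1) * (a - b) := by
      apply mul_le_mul_of_nonneg_right _ hab
      exact mul_le_mul_of_nonneg_left h7 (le_of_lt hp0)
    linarith

lemma CID_qfejer {a ε : ℕ → ℝ} (ha0 : ∀ n, 0 ≤ a n) (hε : ∀ n, 0 ≤ ε n)
    (hsum : Summable ε) (hstep : ∀ n, a (n + 1) ≤ a n + ε n) :
    ∃ l, Tendsto a atTop (𝓝 l) ∧ ∀ n, a n ≤ a 0 + ∑' k, ε k := by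
  set E := ∑' k, ε k with hE
  have hSle : ∀ n, ∑ k ∈ Finset.range n, ε k ≤ E := fun n =>
    Summable.sum_le_tsum _ (fun k _ => hε k) hsum
  have hbound : ∀ n, a n ≤ a 0 + ∑ k ∈ Finset.range n, ε k := by
    intro n; induction n with
    | zero => simp
    | succ m ih =>
      calc a (m + 1) ≤ a m + ε m := hstep m
        _ ≤ a 0 + ∑ k ∈ Finset.range m, ε k + ε m := by linarith
        _ = a 0 + ∑ k ∈ Finset.range (m + 1), ε k := by
            rw [Finset.sum_range_succ]; ring
  set b := fun n => a n + (E - ∑ k ∈ Finset.range n, ε k) with hbdef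
  have hmono : Antitone b := by
    apply antitone_nat_of_succ_le
    intro n
    have := hstep n
    simp only [hbdef, Finset.sum_range_succ]
    linarith
  have hblb : ∀ n, 0 ≤ b n := fun n => by
    have := hSle n; have := ha0 n; simp only [hbdef]; linarith
  have hbconv : Tendsto b atTop (𝓝 (⨅ n, b n)) :=
    tendsto_atTop_ciInf hmono ⟨0, fun y ⟨n, hn⟩ => hn ▸ hblb n⟩
  have hS : Tendsto (fun n => ∑ k ∈ Finset.range n, ε k) atTop (𝓝 E) :=
    hsum.hasSum.tendsto_sum_nat
  refine ⟨⨅ n, b n, ?_, fun n => le_trans (hbound n) (by linarith [hSle n])⟩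
  have : Tendsto (fun n => b n - (E - ∑ k ∈ Finset.range n, ε k)) atTop
      (𝓝 ((⨅ n, b n) - (E - E))) := hbconv.sub (tendsto_const_nhds.sub hS)
  simpa only [hbdef, add_sub_cancel_right, sub_self, sub_zero] using this

section Aux
variable {X : Type*} [MetricSpace X] (G : Geodesic X)

lemma CID_geo_self (z : X) {t : ℝ} (ht : t ∈ Set.Icc (0:ℝ) 1) : G.geo z z t = z := by
  have h := G.geo_dist z z t ht 0 ⟨le_refl 0, zero_le_one⟩
  rw [G.geo_zero] at h
  simp only [dist_self, mul_zero] at h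
  exact dist_eq_zero.mp h

lemma CID_nonexp {T : X → X} (hT : FirmlyNonexpansive G T) (x y : X) :
    dist (T x) (T y) ≤ dist x y := by
  have h := hT x y 0 ⟨le_refl 0, one_pos⟩
  rwa [G.geo_zero, G.geo_zero] at h

lemma CID_star {p c : ℝ} (hp : 1 < p) (hpc : PUnifConvex G p c)
    {T : X → X} (hT : FirmlyNonexpansive G T) {z : X} (hz : T z = z) (x : X) :
    dist (T x) z ^ p + c / 2 * dist x (T x) ^ p ≤ dist x z ^ p := by
  have key : ∀ lam ∈ Set.Ico (0:ℝ) 1,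
      dist (T x) z ^ p + c / 2 * lam * dist x (T x) ^ p ≤ dist x z ^ p := by
    intro lam hlam
    obtain ⟨h0, h1⟩ := hlam
    have hIcc : lam ∈ Set.Icc (0:ℝ) 1 := ⟨h0, le_of_lt h1⟩
    have h2 := hT x z lam ⟨h0, h1⟩
    rw [hz, CID_geo_self G z hIcc] at h2
    have h3 : dist (T x) z ^ p ≤ dist z (G.geo x (T x) lam) ^ p := by
      rw [dist_comm z]
      exact Real.rpow_le_rpow dist_nonneg h2 (by linarith)
    have h4 := hpc x (T x) z lam hIcc
    rw [dist_comm z x, dist_comm z (T x)] at h4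
    set A := dist (T x) z ^ p
    set B := dist x z ^ p
    set D := dist x (T x) ^ p
    have h5 : A ≤ (1 - lam) * B + lam * A - c / 2 * (lam * (1 - lam)) * D :=
      le_trans h3 h4
    have h6 : (1 - lam) * (A + c / 2 * lam * D - B) ≤ 0 := by nlinarith
    nlinarith [sub_pos.mpr h1]
  have hlim : Tendsto (fun k : ℕ => dist (T x) z ^ p
      + c / 2 * (1 - 1 / (k + 1)) * dist x (T x) ^ p) atTop
      (𝓝 (dist (T x) z ^ p + c / 2 * 1 * dist x (T x) ^ p)) := by
    apply Tendsto.add tendsto_const_nhds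
    apply Tendsto.mul_const
    apply Tendsto.const_mul
    have h := (tendsto_one_div_add_atTop_nhds_zero_nat (𝕜 := ℝ)).const_sub 1
    simpa using h
  have := le_of_tendsto hlim (Filter.Eventually.of_forall (fun k => by
    refine key (1 - 1 / (k + 1)) ⟨?_, ?_⟩
    · have : 1 / ((k:ℝ) + 1) ≤ 1 := by
        rw [div_le_one (by positivity)]; linarith [Nat.cast_nonneg (α := ℝ) k]
      linarith
    · have : 0 < 1 / ((k:ℝ) + 1) := by positivity
      linarith))
  linarith [this]

variable {p c : ℝ}

/-- limsup-level midpoint convexity inequality. -/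
lemma CID_conv (hp : 1 < p) (hpc : PUnifConvex G p c)
    (s : ℕ → X) (z₀ : X) (C : ℝ) (hb : ∀ n, dist (s n) z₀ ≤ C) (u v : X) :
    (limsup (fun n => dist (G.geo u v (1/2)) (s n)) atTop) ^ p ≤
      1/2 * (limsup (fun n => dist u (s n)) atTop) ^ p
      + 1/2 * (limsup (fun n => dist v (s n)) atTop) ^ p - c/8 * dist u v ^ p := by
  have hp0 : (0:ℝ) < p := by linarith
  set m := G.geo u v (1/2) with hm
  have hub : ∀ y : X, ∀ n, dist y (s n) ≤ dist y z₀ + C := fun y n => by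
    calc dist y (s n) ≤ dist y z₀ + dist z₀ (s n) := dist_triangle _ _ _
      _ ≤ dist y z₀ + C := by rw [dist_comm z₀]; linarith [hb n]
  set A : X → ℝ := fun y => limsup (fun n => dist y (s n)) atTop with hA
  have hA0 : ∀ y, 0 ≤ A y := fun y =>
    CID_limsup_nonneg (fun n => dist_nonneg) (hub y)
  have hpt : ∀ n, dist m (s n) ^ p ≤ 1/2 * dist u (s n) ^ p
      + 1/2 * dist v (s n) ^ p - c/8 * dist u v ^ p := by
    intro n
    have h := hpc u v (s n) (1/2) ⟨by norm_num, by norm_num⟩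
    rw [dist_comm (s n) (G.geo u v (1/2)), dist_comm (s n) u, dist_comm (s n) v] at h
    rw [hm]
    linarith [h]
  have hδstep : ∀ δ : ℝ, 0 < δ → (A m) ^ p ≤ 1/2 * (A u + δ) ^ p
      + 1/2 * (A v + δ) ^ p - c/8 * dist u v ^ p := by
    intro δ hδ
    set R := 1/2 * (A u + δ) ^ p + 1/2 * (A v + δ) ^ p - c/8 * dist u v ^ p with hR
    have hevu : ∀ᶠ n in atTop, dist u (s n) < A u + δ :=
      eventually_lt_of_limsup_lt (by linarith [hA0 u]) (CID_bddu (hub u))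
    have hevv : ∀ᶠ n in atTop, dist v (s n) < A v + δ :=
      eventually_lt_of_limsup_lt (by linarith [hA0 v]) (CID_bddu (hub v))
    have hev : ∀ᶠ n in atTop, dist m (s n) ^ p ≤ R := by
      filter_upwards [hevu, hevv] with n hnu hnv
      have h1 : dist u (s n) ^ p ≤ (A u + δ) ^ p :=
        Real.rpow_le_rpow dist_nonneg hnu.le hp0.le
      have h2 : dist v (s n) ^ p ≤ (A v + δ) ^ p :=
        Real.rpow_le_rpow dist_nonneg hnv.le hp0.le
      have := hpt n
      rw [hR]; linarith
    have hR0 : 0 ≤ R := by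
      obtain ⟨n, hn⟩ := hev.exists
      exact le_trans (Real.rpow_nonneg dist_nonneg p) hn
    have hpow : ∀ n, dist m (s n) ^ p ≤ R → dist m (s n) ≤ R ^ (1/p) := by
      intro n hn
      have h1 : dist m (s n) = (dist m (s n) ^ p) ^ (1/p) := by
        rw [← Real.rpow_mul dist_nonneg, mul_one_div_cancel (ne_of_gt hp0),
          Real.rpow_one]
      rw [h1]
      exact Real.rpow_le_rpow (Real.rpow_nonneg dist_nonneg p) hn (by positivity)
    have hAm : A m ≤ R ^ (1/p) := by
      apply limsup_le_of_le (CID_cobddu (fun n => dist_nonneg))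
      filter_upwards [hev] with n hn
      exact hpow n hn
    calc (A m) ^ p ≤ (R ^ (1/p)) ^ p :=
          Real.rpow_le_rpow (hA0 m) hAm hp0.le
      _ = R := by
          rw [← Real.rpow_mul hR0, one_div_mul_cancel (ne_of_gt hp0), Real.rpow_one]
  have htend : ∀ y : X, Tendsto (fun k : ℕ => (A y + 1 / (k + 1)) ^ p) atTop
      (𝓝 ((A y) ^ p)) := by
    intro y
    have h1 : Tendsto (fun k : ℕ => A y + 1 / ((k : ℝ) + 1)) atTop (𝓝 (A y)) := by
      simpa using tendsto_const_nhds.add CID_one_div_succ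
    have hcont : ContinuousAt (fun t : ℝ => t ^ p) (A y) :=
      Real.continuousAt_rpow_const (A y) p (Or.inr hp0.le)
    exact hcont.tendsto.comp h1
  have hlim : Tendsto (fun k : ℕ => 1/2 * (A u + 1 / (k + 1)) ^ p
      + 1/2 * (A v + 1 / (k + 1)) ^ p - c/8 * dist u v ^ p) atTop
      (𝓝 (1/2 * (A u) ^ p + 1/2 * (A v) ^ p - c/8 * dist u v ^ p)) :=
    (((htend u).const_mul _).add ((htend v).const_mul _)).sub tendsto_const_nhds
  show (A m) ^ p ≤ 1/2 * (A u) ^ p + 1/2 * (A v) ^ p - c/8 * dist u v ^ p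
  exact ge_of_tendsto hlim (Eventually.of_forall fun k =>
    hδstep (1 / (k + 1)) (CID_one_div_succ_pos k))

/-- Existence and uniqueness of asymptotic centers of bounded sequences. -/
lemma CID_ac [CompleteSpace X] (hp : 1 < p) (hc : 0 < c) (hpc : PUnifConvex G p c)
    (s : ℕ → X) (z₀ : X) (C : ℝ) (hb : ∀ n, dist (s n) z₀ ≤ C) :
    ∃ u, IsAsymptoticCenter s u ∧ ∀ v, IsAsymptoticCenter s v → v = u := by
  haveI : Nonempty X := ⟨z₀⟩
  have hp0 : (0:ℝ) < p := by linarith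
  have hub : ∀ y : X, ∀ n, dist y (s n) ≤ dist y z₀ + C := fun y n => by
    calc dist y (s n) ≤ dist y z₀ + dist z₀ (s n) := dist_triangle _ _ _
      _ ≤ dist y z₀ + C := by rw [dist_comm z₀]; linarith [hb n]
  set A : X → ℝ := fun y => limsup (fun n => dist y (s n)) atTop with hA
  have hA0 : ∀ y, 0 ≤ A y := fun y =>
    CID_limsup_nonneg (fun n => dist_nonneg) (hub y)
  set B : X → ℝ := fun y => (A y) ^ p with hB
  have hB0 : ∀ y, 0 ≤ B y := fun y => Real.rpow_nonneg (hA0 y) p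
  have hbddB : BddBelow (range B) := ⟨0, fun b ⟨y, hy⟩ => hy ▸ hB0 y⟩
  set μ := ⨅ y, B y with hμ
  have hμ0 : 0 ≤ μ := le_ciInf hB0
  have hμle : ∀ y, μ ≤ B y := fun y => ciInf_le hbddB y
  have hYex : ∀ k : ℕ, ∃ y, B y < μ + 1 / (k + 1) := fun k =>
    exists_lt_of_ciInf_lt (lt_add_of_pos_right μ (CID_one_div_succ_pos k))
  choose Y hY using hYex
  have hconv : ∀ y y' : X, μ ≤ 1/2 * B y + 1/2 * B y' - c/8 * dist y y' ^ p := by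
    intro y y'
    have h1 := CID_conv G hp hpc s z₀ C hb y y'
    exact le_trans (hμle (G.geo y y' (1/2))) h1
  have key : ∀ k l, c/8 * dist (Y k) (Y l) ^ p
      ≤ 1/2 * (1 / (k + 1)) + 1/2 * (1 / (l + 1)) := by
    intro k l
    have h1 := hconv (Y k) (Y l)
    have h2 := hY k
    have h3 := hY l
    linarith
  have hcauchy : CauchySeq Y := by
    rw [Metric.cauchySeq_iff]
    intro δ hδ
    obtain ⟨N, hN⟩ := exists_nat_one_div_lt (show 0 < c/8 * δ ^ p by positivity)
    refine ⟨N, fun k hk l hl => ?_⟩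
    have h1 : (1:ℝ) / (k + 1) ≤ 1 / (N + 1) := by
      apply one_div_le_one_div_of_le (by positivity)
      exact_mod_cast by omega
    have h2 : (1:ℝ) / (l + 1) ≤ 1 / (N + 1) := by
      apply one_div_le_one_div_of_le (by positivity)
      exact_mod_cast by omega
    have h3 : c/8 * dist (Y k) (Y l) ^ p < c/8 * δ ^ p := by
      calc c/8 * dist (Y k) (Y l) ^ p ≤ 1/2 * (1/(k+1)) + 1/2 * (1/(l+1)) := key k l
        _ ≤ 1 / (N + 1) := by linarith
        _ < c/8 * δ ^ p := by linarith
    have h4 : dist (Y k) (Y l) ^ p < δ ^ p :=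
      lt_of_mul_lt_mul_left h3 (by positivity)
    by_contra hcon
    push_neg at hcon
    exact absurd h4 (not_lt.mpr (Real.rpow_le_rpow hδ.le hcon hp0.le))
  obtain ⟨u, hu⟩ := cauchySeq_tendsto_of_complete hcauchy
  have hlip : ∀ y y' : X, A y ≤ dist y y' + A y' := by
    intro y y'
    apply le_of_forall_pos_le_add
    intro δ hδ
    have hev : ∀ᶠ n in atTop, dist y' (s n) < A y' + δ :=
      eventually_lt_of_limsup_lt (by linarith) (CID_bddu (hub y'))
    apply limsup_le_of_le (CID_cobddu (fun n => dist_nonneg))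
    filter_upwards [hev] with n hn
    have := dist_triangle y y' (s n)
    linarith
  have hBμ : Tendsto (fun k => B (Y k)) atTop (𝓝 μ) := by
    apply tendsto_of_tendsto_of_tendsto_of_le_of_le (tendsto_const_nhds (x := μ))
      (by simpa using (tendsto_const_nhds (x := μ)).add CID_one_div_succ)
      (fun k => hμle (Y k)) (fun k => (hY k).le)
  have hAY : ∀ k, A (Y k) = (B (Y k)) ^ (1/p) := by
    intro k
    rw [hB]
    rw [← Real.rpow_mul (hA0 (Y k)), mul_one_div_cancel (ne_of_gt hp0), Real.rpow_one]
  have hAu_le : ∀ k, A u ≤ dist u (Y k) + (B (Y k)) ^ (1/p) := fun k =>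
    (hAY k) ▸ hlip u (Y k)
  have hdistY : Tendsto (fun k => dist u (Y k)) atTop (𝓝 0) := by
    have := (tendsto_const_nhds (x := u)).dist hu
    simpa using this
  have hBY : Tendsto (fun k => (B (Y k)) ^ (1/p)) atTop (𝓝 (μ ^ (1/p))) :=
    ((Real.continuousAt_rpow_const μ (1/p) (Or.inr (by positivity))).tendsto).comp hBμ
  have hAuμ : A u ≤ μ ^ (1/p) := by
    have hlim := hdistY.add hBY
    rw [zero_add] at hlim
    exact ge_of_tendsto hlim (Eventually.of_forall hAu_le)
  have hBuμ : B u ≤ μ := by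
    calc B u = (A u) ^ p := rfl
      _ ≤ (μ ^ (1/p)) ^ p := Real.rpow_le_rpow (hA0 u) hAuμ hp0.le
      _ = μ := by
          rw [← Real.rpow_mul hμ0, one_div_mul_cancel (ne_of_gt hp0), Real.rpow_one]
  have hminB : ∀ y, B u ≤ B y := fun y => le_trans hBuμ (hμle y)
  have hminA : IsAsymptoticCenter s u := by
    intro y
    by_contra hcon
    push_neg at hcon
    have : B y < B u := Real.rpow_lt_rpow (hA0 y) hcon hp0
    exact absurd (hminB y) (not_le.mpr this)
  refine ⟨u, hminA, fun v hv => ?_⟩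
  have hminBv : ∀ y, B v ≤ B y := fun y =>
    Real.rpow_le_rpow (hA0 v) (hv y) hp0.le
  have h1 := CID_conv G hp hpc s z₀ C hb u v
  have h2 : B u ≤ (A (G.geo u v (1/2))) ^ p := hminB _
  have h3 : B v ≤ B u := hminBv u
  have h4 : B u ≤ B v := hminB v
  have h5 : c/8 * dist u v ^ p ≤ 0 := by
    have h6 : (A (G.geo u v (1/2))) ^ p
        ≤ 1/2 * B u + 1/2 * B v - c/8 * dist u v ^ p := h1
    linarith
  by_contra hne
  have hd : 0 < dist u v := dist_pos.mpr (fun h => hne h.symm)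
  have : 0 < c/8 * dist u v ^ p := by
    have := Real.rpow_pos_of_pos hd p
    positivity
  linarith

end Aux

/-- Δ-convergence (and strong convergence under bounded compactness of some image) of the
inexact cyclic iteration of finitely many firmly nonexpansive mappings with a common fixed
point in a complete `p`-uniformly convex space. -/
theorem cyclic_iteration_delta_converges {X : Type*} [MetricSpace X] [CompleteSpace X]
    (G : Geodesic X) (p c : ℝ) (hp : 1 < p) (hc : 0 < c) (hpc : PUnifConvex G p c)
    {r : ℕ} (hr : 0 < r) (T : Fin r → X → X)
    (hT : ∀ i, FirmlyNonexpansive G (T i))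
    (hF : ∃ u : X, ∀ i, T i u = u)
    (ε : ℕ → ℝ) (hsum : Summable ε)
    (x₀ : X) (x : ℕ → X) (hx0 : x 0 = x₀)
    (hx : ∀ n : ℕ, dist (x (n + 1)) (T ⟨n % r, Nat.mod_lt n hr⟩ (x n)) ≤ ε n) :
    ∃ u : X, (∀ i, T i u = u) ∧
      (∀ i, Filter.Tendsto (fun n => dist (x n) (T i (x n))) Filter.atTop (nhds 0)) ∧
      DeltaConvergesTo x u ∧
      ((∃ i : Fin r, ∀ s : Set X, s ⊆ Set.range (T i) → Bornology.IsBounded s →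
          IsCompact (closure s)) →
        Filter.Tendsto x Filter.atTop (nhds u)) := by
  classical
  obtain ⟨z₀, hz₀⟩ := hF
  have hp0 : (0:ℝ) < p := by linarith
  have hε0 : ∀ n, 0 ≤ ε n := fun n => le_trans dist_nonneg (hx n)
  set E := ∑' k, ε k with hE
  have hE0 : 0 ≤ E := tsum_nonneg hε0
  have hεE : ∀ n, ε n ≤ E := fun n => Summable.le_tsum hsum n (fun m _ => hε0 m)
  set Tc : ℕ → X → X := fun n => T ⟨n % r, Nat.mod_lt n hr⟩ with hTc
  set D : ℕ → ℝ := fun n => dist (x n) (Tc n (x n)) with hD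
  have hD0' : ∀ n, 0 ≤ D n := fun n => dist_nonneg
  -- quasi-Fejér monotonicity
  have hstep : ∀ z, (∀ i, T i z = z) →
      ∀ n, dist (x (n+1)) z ≤ dist (x n) z + ε n := by
    intro z hz n
    have h1 : dist (Tc n (x n)) z ≤ dist (x n) z := by
      have h := CID_nonexp G (hT ⟨n % r, Nat.mod_lt n hr⟩) (x n) z
      rwa [hz ⟨n % r, Nat.mod_lt n hr⟩] at h
    calc dist (x (n+1)) z ≤ dist (x (n+1)) (Tc n (x n)) + dist (Tc n (x n)) z :=
          dist_triangle _ _ _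
      _ ≤ ε n + dist (x n) z := add_le_add (hx n) h1
      _ = dist (x n) z + ε n := add_comm _ _
  have hfej : ∀ z, (∀ i, T i z = z) →
      ∃ l, Tendsto (fun n => dist (x n) z) atTop (𝓝 l)
        ∧ ∀ n, dist (x n) z ≤ dist (x 0) z + E := by
    intro z hz
    obtain ⟨l, hl, hbd⟩ := CID_qfejer (fun n => dist_nonneg) hε0 hsum (hstep z hz)
    exact ⟨l, hl, hbd⟩
  set M := dist (x 0) z₀ + E with hM
  obtain ⟨l₀, hl₀, hM'⟩ := hfej z₀ hz₀
  have hM0 : 0 ≤ M := add_nonneg dist_nonneg hE0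
  -- asymptotic regularity: summability of D^p
  set a : ℕ → ℝ := fun n => dist (x n) z₀ with ha
  have hstar : ∀ n, dist (Tc n (x n)) z₀ ^ p + c/2 * D n ^ p ≤ a n ^ p := fun n =>
    CID_star G hp hpc (hT ⟨n % r, Nat.mod_lt n hr⟩) (hz₀ ⟨n % r, Nat.mod_lt n hr⟩) (x n)
  have hsn_le : ∀ n, dist (Tc n (x n)) z₀ ≤ a n := by
    intro n
    have h := CID_nonexp G (hT ⟨n % r, Nat.mod_lt n hr⟩) (x n) z₀
    rwa [hz₀ ⟨n % r, Nat.mod_lt n hr⟩] at h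
  set K := p * (M + E) ^ (p - 1) with hK
  have hK0 : 0 ≤ K := by
    have : (0:ℝ) ≤ (M + E) ^ (p - 1) := Real.rpow_nonneg (by linarith) _
    positivity
  have hKstep : ∀ n, a (n+1) ^ p ≤ dist (Tc n (x n)) z₀ ^ p + K * ε n := by
    intro n
    set sn := dist (Tc n (x n)) z₀ with hsn
    rcases le_or_gt (a (n+1)) sn with h | h
    · have h2 : a (n+1) ^ p ≤ sn ^ p := Real.rpow_le_rpow dist_nonneg h hp0.le
      have h3 : 0 ≤ K * ε n := mul_nonneg hK0 (hε0 n)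
      linarith
    · have h1 : a (n+1) ≤ sn + ε n := by
        calc a (n+1) ≤ dist (x (n+1)) (Tc n (x n)) + sn := dist_triangle _ _ _
          _ ≤ ε n + sn := add_le_add (hx n) (le_refl _)
          _ = sn + ε n := add_comm _ _
      have h3 : a (n+1) ≤ M + E := by
        have := hsn_le n; have := hM' n; have := hεE n; linarith
      have h4 := CID_rpow_mvt hp (dist_nonneg : (0:ℝ) ≤ sn) h.le h3
      have h5 : a (n+1) - sn ≤ ε n := by linarith
      have h6 : K * (a (n+1) - sn) ≤ K * ε n := mul_le_mul_of_nonneg_left h5 hK0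
      rw [← hK] at h4
      linarith
  have hterm : ∀ n, c/2 * D n ^ p ≤ a n ^ p - a (n+1) ^ p + K * ε n := by
    intro n; have := hstar n; have := hKstep n; linarith
  have hsumD : Summable (fun n => c/2 * D n ^ p) := by
    apply summable_of_sum_range_le
      (fun n => mul_nonneg (by positivity) (Real.rpow_nonneg (hD0' n) p))
    intro N
    calc ∑ n ∈ Finset.range N, (c/2 * D n ^ p)
        ≤ ∑ n ∈ Finset.range N, (a n ^ p - a (n+1) ^ p + K * ε n) :=
          Finset.sum_le_sum (fun n _ => hterm n)
      _ = (a 0 ^ p - a N ^ p) + K * ∑ n ∈ Finset.range N, ε n := by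
          rw [Finset.sum_add_distrib, Finset.sum_range_sub' (fun n => a n ^ p),
            ← Finset.mul_sum]
      _ ≤ a 0 ^ p + K * E := by
          have h1 : 0 ≤ a N ^ p := Real.rpow_nonneg dist_nonneg p
          have h2 : ∑ n ∈ Finset.range N, ε n ≤ E :=
            Summable.sum_le_tsum _ (fun k _ => hε0 k) hsum
          have h3 : K * ∑ n ∈ Finset.range N, ε n ≤ K * E :=
            mul_le_mul_of_nonneg_left h2 hK0
          linarith
  have hDp0 : Tendsto (fun n => D n ^ p) atTop (𝓝 0) := by
    have h1 : Summable (fun n => D n ^ p) := by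
      have h2 := hsumD.mul_left (2/c)
      apply h2.congr
      intro n
      field_simp
    exact h1.tendsto_atTop_zero
  have hDto0 : Tendsto D atTop (𝓝 0) := by
    have hcont : ContinuousAt (fun t : ℝ => t ^ (1/p)) 0 :=
      Real.continuousAt_rpow_const 0 (1/p) (Or.inr (by positivity))
    have h1 := hcont.tendsto.comp hDp0
    rw [Real.zero_rpow (by positivity : (1:ℝ)/p ≠ 0)] at h1
    apply h1.congr
    intro n
    show (D n ^ p) ^ (1/p) = D n
    rw [← Real.rpow_mul (hD0' n), mul_one_div_cancel (ne_of_gt hp0), Real.rpow_one]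
  have he0 : Tendsto (fun n => dist (x (n+1)) (x n)) atTop (𝓝 0) := by
    apply squeeze_zero (g := fun n => ε n + D n) (fun n => dist_nonneg)
    · intro n
      calc dist (x (n+1)) (x n)
          ≤ dist (x (n+1)) (Tc n (x n)) + dist (Tc n (x n)) (x n) := dist_triangle _ _ _
        _ ≤ ε n + D n := add_le_add (hx n) (by rw [dist_comm])
    · simpa using hsum.tendsto_atTop_zero.add hDto0
  -- asymptotic regularity for each i
  have hreg : ∀ i, Tendsto (fun n => dist (x n) (T i (x n))) atTop (𝓝 0) := by
    intro i
    set j : ℕ → ℕ := fun n => (r + i.val - n % r) % r with hj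
    have hjlt : ∀ n, j n < r := fun n => Nat.mod_lt _ hr
    have hmod : ∀ n, (n + j n) % r = i.val := by
      intro n
      have h3 : n % r ≤ r + i.val :=
        le_of_lt (lt_of_lt_of_le (Nat.mod_lt n hr) (Nat.le_add_right r _))
      have hme : (n + j n) % r = (n % r + (r + i.val - n % r)) % r :=
        Nat.ModEq.add (Nat.mod_modEq n r).symm (Nat.mod_modEq _ r)
      rw [hme, Nat.add_sub_cancel' h3, Nat.add_mod_left, Nat.mod_eq_of_lt i.isLt]
    have hTeq : ∀ n, Tc (n + j n) = T i := by
      intro n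
      have heq : (⟨(n + j n) % r, Nat.mod_lt _ hr⟩ : Fin r) = i := Fin.ext (hmod n)
      show T ⟨(n + j n) % r, Nat.mod_lt _ hr⟩ = T i
      rw [heq]
    have hbound : ∀ n, dist (x n) (T i (x n))
        ≤ 2 * dist (x n) (x (n + j n)) + D (n + j n) := by
      intro n
      have h1 := dist_triangle4 (x n) (x (n + j n)) (T i (x (n + j n))) (T i (x n))
      have h2 : dist (T i (x (n + j n))) (T i (x n)) ≤ dist (x (n + j n)) (x n) :=
        CID_nonexp G (hT i) _ _
      have h3 : dist (x (n + j n)) (T i (x (n + j n))) = D (n + j n) := by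
        rw [hD]
        show dist (x (n + j n)) (T i (x (n + j n)))
          = dist (x (n + j n)) (Tc (n + j n) (x (n + j n)))
        rw [hTeq n]
      rw [dist_comm (x (n + j n)) (x n)] at h2
      linarith [h1, h2, h3.le, h3.ge]
    have hsum_b : ∀ n, dist (x n) (x (n + j n))
        ≤ ∑ t ∈ Finset.range r, dist (x (n + t + 1)) (x (n + t)) := by
      intro n
      have h1 : dist (x n) (x (n + j n))
          ≤ ∑ t ∈ Finset.range (j n), dist (x (n + t)) (x (n + t + 1)) := by
        have h := dist_le_range_sum_dist (fun t => x (n + t)) (j n)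
        simpa [← add_assoc] using h
      refine le_trans h1 (le_trans (Finset.sum_le_sum_of_subset_of_nonneg
        (Finset.range_subset_range.mpr (hjlt n).le) (fun t _ _ => dist_nonneg)) ?_)
      apply le_of_eq
      apply Finset.sum_congr rfl
      intro t _
      rw [dist_comm]
    apply squeeze_zero (g := fun n =>
      2 * (∑ t ∈ Finset.range r, dist (x (n + t + 1)) (x (n + t))) + D (n + j n))
      (fun n => dist_nonneg)
    · intro n
      have := hbound n
      have := hsum_b n
      linarith
    · have hsumt : Tendsto (fun n =>
          ∑ t ∈ Finset.range r, dist (x (n + t + 1)) (x (n + t))) atTop (𝓝 0) := by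
        have h1 : ∀ t : ℕ, Tendsto (fun n => dist (x (n + t + 1)) (x (n + t)))
            atTop (𝓝 0) := by
          intro t
          exact he0.comp (tendsto_add_atTop_nat t)
        have h2 := tendsto_finset_sum (Finset.range r) (fun t _ => h1 t)
        simpa using h2
      have hjD : Tendsto (fun n => D (n + j n)) atTop (𝓝 0) := by
        apply hDto0.comp
        exact tendsto_atTop_mono (fun n => Nat.le_add_right n (j n)) tendsto_id
      have := (hsumt.const_mul 2).add hjD
      simpa using this
  -- asymptotic center machinery
  obtain ⟨u, hu_ac, hu_uniq⟩ := CID_ac G hp hc hpc x z₀ M hM'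
  -- demiclosedness
  have hdemi : ∀ (s : ℕ → X), (∀ n, dist (s n) z₀ ≤ M) →
      (∀ i : Fin r, Tendsto (fun n => dist (s n) (T i (s n))) atTop (𝓝 0)) →
      ∀ w, IsAsymptoticCenter s w → ∀ i, IsAsymptoticCenter s (T i w) := by
    intro s hbs hregs w hw i y
    refine le_trans ?_ (hw y)
    apply le_of_forall_pos_le_add
    intro δ hδ
    have hbw : ∀ n, dist w (s n) ≤ dist w z₀ + M := fun n => by
      calc dist w (s n) ≤ dist w z₀ + dist z₀ (s n) := dist_triangle _ _ _
        _ ≤ dist w z₀ + M := by rw [dist_comm z₀]; linarith [hbs n]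
    have hev1 : ∀ᶠ n in atTop,
        dist w (s n) < limsup (fun n => dist w (s n)) atTop + δ/2 :=
      eventually_lt_of_limsup_lt (by linarith) (CID_bddu hbw)
    have hev2 : ∀ᶠ n in atTop, dist (s n) (T i (s n)) < δ/2 :=
      (hregs i).eventually_lt_const (by linarith)
    apply limsup_le_of_le (CID_cobddu (fun n => dist_nonneg))
    filter_upwards [hev1, hev2] with n h1 h2
    have h3 : dist (T i w) (s n)
        ≤ dist (T i w) (T i (s n)) + dist (T i (s n)) (s n) := dist_triangle _ _ _
    have h4 : dist (T i w) (T i (s n)) ≤ dist w (s n) := CID_nonexp G (hT i) _ _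
    rw [dist_comm (T i (s n)) (s n)] at h3
    linarith
  have huF : ∀ i, T i u = u := fun i =>
    hu_uniq (T i u) (hdemi x hM' hreg u hu_ac i)
  obtain ⟨lu, hlu, _⟩ := hfej u huF
  have hlimu : limsup (fun n => dist u (x n)) atTop = lu :=
    (hlu.congr (fun n => dist_comm (x n) u)).limsup_eq
  -- Δ-convergence
  have hdelta : DeltaConvergesTo x u := by
    intro φ hφ
    have hbφ : ∀ n, dist ((x ∘ φ) n) z₀ ≤ M := fun n => hM' (φ n)
    obtain ⟨v, hv_ac, hv_uniq⟩ := CID_ac G hp hc hpc (x ∘ φ) z₀ M hbφ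
    have hregφ : ∀ i : Fin r, Tendsto (fun n => dist ((x ∘ φ) n) (T i ((x ∘ φ) n)))
        atTop (𝓝 0) := fun i => (hreg i).comp hφ.tendsto_atTop
    have hvF : ∀ i, T i v = v := fun i =>
      hv_uniq _ (hdemi (x ∘ φ) hbφ hregφ v hv_ac i)
    obtain ⟨lv, hlv, _⟩ := hfej v hvF
    have hlsu : limsup (fun n => dist u ((x ∘ φ) n)) atTop = lu := by
      have h1 : Tendsto (fun n => dist u ((x ∘ φ) n)) atTop (𝓝 lu) :=
        (hlu.comp hφ.tendsto_atTop).congr (fun n => dist_comm (x (φ n)) u)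
      exact h1.limsup_eq
    have hlsv : limsup (fun n => dist v ((x ∘ φ) n)) atTop = lv := by
      have h1 : Tendsto (fun n => dist v ((x ∘ φ) n)) atTop (𝓝 lv) :=
        (hlv.comp hφ.tendsto_atTop).congr (fun n => dist_comm (x (φ n)) v)
      exact h1.limsup_eq
    have hlimv : limsup (fun n => dist v (x n)) atTop = lv :=
      (hlv.congr (fun n => dist_comm (x n) v)).limsup_eq
    have hluv : lu ≤ lv := by
      have h1 := hu_ac v
      rw [hlimu, hlimv] at h1
      exact h1
    have hacu : IsAsymptoticCenter (x ∘ φ) u := by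
      intro y
      rw [hlsu]
      calc lu ≤ lv := hluv
        _ = limsup (fun n => dist v ((x ∘ φ) n)) atTop := hlsv.symm
        _ ≤ _ := hv_ac y
    exact ⟨hacu, fun w hw => (hv_uniq w hw).trans (hv_uniq u hacu).symm⟩
  refine ⟨u, huF, hreg, hdelta, ?_⟩
  -- strong convergence under bounded compactness
  rintro ⟨i, hcomp⟩
  set s : Set X := T i '' (Set.range x) with hs
  have hsub : s ⊆ Set.range (T i) := by
    rintro _ ⟨w, _, rfl⟩; exact ⟨w, rfl⟩
  have hbdds : Bornology.IsBounded s := by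
    apply (Metric.isBounded_closedBall (x := T i z₀) (r := M)).subset
    rintro _ ⟨w, ⟨n, rfl⟩, rfl⟩
    rw [Metric.mem_closedBall]
    calc dist (T i (x n)) (T i z₀) ≤ dist (x n) z₀ := CID_nonexp G (hT i) _ _
      _ ≤ M := hM' n
  have hKc := hcomp s hsub hbdds
  have hmem : ∀ n, T i (x n) ∈ closure s := fun n =>
    subset_closure ⟨x n, ⟨n, rfl⟩, rfl⟩
  obtain ⟨w, hwK, φ, hφ, hwt⟩ := hKc.tendsto_subseq hmem
  have hxφ : Tendsto (x ∘ φ) atTop (𝓝 w) := by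
    rw [tendsto_iff_dist_tendsto_zero]
    apply squeeze_zero (g := fun n =>
        dist (x (φ n)) (T i (x (φ n))) + dist (T i (x (φ n))) w)
      (fun n => dist_nonneg)
    · intro n
      exact dist_triangle _ _ _
    · have h1 : Tendsto (fun n => dist (x (φ n)) (T i (x (φ n)))) atTop (𝓝 0) :=
        (hreg i).comp hφ.tendsto_atTop
      have h2 : Tendsto (fun n => dist (T i (x (φ n))) w) atTop (𝓝 0) := by
        have := hwt.dist (tendsto_const_nhds (x := w))
        simpa using this
      simpa using h1.add h2
  have hwu : w = u := by
    apply (hdelta φ hφ).2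
    intro y
    have h0 : Tendsto (fun n => dist w ((x ∘ φ) n)) atTop (𝓝 0) := by
      have := (tendsto_const_nhds (x := w)).dist hxφ
      simpa using this
    rw [h0.limsup_eq]
    exact CID_limsup_nonneg (fun n => dist_nonneg) (fun n => by
      calc dist y ((x ∘ φ) n) ≤ dist y z₀ + dist z₀ ((x ∘ φ) n) := dist_triangle _ _ _
        _ ≤ dist y z₀ + M := by
            rw [dist_comm z₀]
            have := hM' (φ n)
            simpa using by linarith)
  have hlu0 : lu = 0 := by
    have h1 : Tendsto (fun n => dist (x (φ n)) u) atTop (𝓝 lu) :=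
      hlu.comp hφ.tendsto_atTop
    have h2 : Tendsto (fun n => dist (x (φ n)) u) atTop (𝓝 0) := by
      have h3 : Tendsto (x ∘ φ) atTop (𝓝 u) := hwu ▸ hxφ
      have := h3.dist (tendsto_const_nhds (x := u))
      simpa using this
    exact tendsto_nhds_unique h1 h2
  rw [tendsto_iff_dist_tendsto_zero]
  exact hlu0 ▸ hlu
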